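/- Suppose b j = γ for all j, where γ ∈ [0,1). Then every row sum of A equals 1 − γ (i.e. A.mulVec 1 = (1−γ)·1), 1 − γ is a complex eigenvalue of A, and every complex eigenvalue μ of A satisfies |μ| ≤ 1 − γ; hence the spectral radius of A equals 1 − γ. -/

import Mathlib

open Matrix

section Aux

variable {n : ℕ}

/-- Entrywise nonnegativity of the inverse of `1 - K` when `K` is nonnegative with
row sums bounded by `γ < 1`. -/
lemma aux_inv_nonneg (K : Matrix (Fin n) (Fin n) ℝ) (γ : ℝ) (hγ0 : 0 ≤ γ) (hγ1 : γ < 1)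
    (hKnn : ∀ i j, 0 ≤ K i j) (hKrow : ∀ i, ∑ j, K i j = γ)
    (hInv : IsUnit (1 - K)) : ∀ i j, 0 ≤ (1 - K)⁻¹ i j := by
  have hpow_nn : ∀ m : ℕ, ∀ i j, 0 ≤ (K ^ m) i j := by
    intro m
    induction m with
    | zero => intro i j; simp [Matrix.one_apply]; split <;> norm_num
    | succ m ih =>
      intro i j
      rw [pow_succ, Matrix.mul_apply]
      exact Finset.sum_nonneg fun k _ => mul_nonneg (ih i k) (hKnn k j)
  have hpow_row : ∀ m : ℕ, ∀ i, ∑ j, (K ^ m) i j = γ ^ m := by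
    intro m
    induction m with
    | zero => intro i; simp [Matrix.one_apply]
    | succ m ih =>
      intro i
      rw [pow_succ]
      simp only [Matrix.mul_apply]
      rw [Finset.sum_comm]
      calc ∑ k, ∑ j, (K ^ m) i k * K k j
          = ∑ k, (K ^ m) i k * γ := by
            refine Finset.sum_congr rfl fun k _ => ?_
            rw [← Finset.mul_sum, hKrow k]
        _ = γ ^ m * γ := by rw [← Finset.sum_mul, ih i]
        _ = γ ^ (m + 1) := by ring
  have hpow_le : ∀ m : ℕ, ∀ i j, (K ^ m) i j ≤ γ ^ m := by
    intro m i j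
    rw [← hpow_row m i]
    exact Finset.single_le_sum (fun k _ => hpow_nn m i k) (Finset.mem_univ j)
  set W := (1 - K)⁻¹ with hW
  have hdet : IsUnit (1 - K).det := (Matrix.isUnit_iff_isUnit_det _).mp hInv
  have hWmul : W * (1 - K) = 1 := Matrix.nonsing_inv_mul _ hdet
  have hmulW : (1 - K) * W = 1 := Matrix.mul_nonsing_inv _ hdet
  have hgeom : ∀ N : ℕ, W = (∑ m ∈ Finset.range N, K ^ m) + K ^ N * W := by
    intro N
    have h1 : (∑ m ∈ Finset.range N, K ^ m) * (1 - K) = 1 - K ^ N := by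
      have h := geom_sum_mul K N
      calc (∑ m ∈ Finset.range N, K ^ m) * (1 - K)
          = -((∑ m ∈ Finset.range N, K ^ m) * (K - 1)) := by noncomm_ring
        _ = -(K ^ N - 1) := by rw [h]
        _ = 1 - K ^ N := by noncomm_ring
    have h2 : (1 - K ^ N) * W = ∑ m ∈ Finset.range N, K ^ m := by
      rw [← h1, Matrix.mul_assoc, hmulW, Matrix.mul_one]
    have h3 : W - K ^ N * W = ∑ m ∈ Finset.range N, K ^ m := by
      rw [← h2]; rw [Matrix.sub_mul, Matrix.one_mul]
    exact sub_eq_iff_eq_add.mp h3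
  intro i j
  set C : ℝ := ∑ k, |W k j| with hC
  have hCnn : 0 ≤ C := Finset.sum_nonneg fun k _ => abs_nonneg _
  have hbound : ∀ N : ℕ, -(C * γ ^ N) ≤ W i j := by
    intro N
    have hEq := congrFun (congrFun (hgeom N) i) j
    have hsum_nn : 0 ≤ (∑ m ∈ Finset.range N, K ^ m) i j := by
      rw [Matrix.sum_apply]
      exact Finset.sum_nonneg fun m _ => hpow_nn m i j
    have hrem : -(C * γ ^ N) ≤ (K ^ N * W) i j := by
      rw [Matrix.mul_apply]
      have : ∀ k ∈ Finset.univ, -(γ ^ N * |W k j|) ≤ (K ^ N) i k * W k j := by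
        intro k _
        have h1 : |(K ^ N) i k * W k j| ≤ γ ^ N * |W k j| := by
          rw [abs_mul]
          exact mul_le_mul_of_nonneg_right
            ((abs_of_nonneg (hpow_nn N i k)).le.trans (hpow_le N i k)) (abs_nonneg _)
        linarith [neg_abs_le ((K ^ N) i k * W k j)]
      calc -(C * γ ^ N) = ∑ k, -(γ ^ N * |W k j|) := by
            rw [hC, Finset.sum_mul, neg_eq_iff_eq_neg, ← Finset.sum_neg_distrib]
            exact Finset.sum_congr rfl fun k _ => by ring
        _ ≤ ∑ k, (K ^ N) i k * W k j := Finset.sum_le_sum this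
    have : W i j = (∑ m ∈ Finset.range N, K ^ m) i j + (K ^ N * W) i j := by
      rw [hEq]; simp [Matrix.add_apply]
    linarith
  have htend : Filter.Tendsto (fun N : ℕ => -(C * γ ^ N)) Filter.atTop (nhds 0) := by
    have := (tendsto_pow_atTop_nhds_zero_of_lt_one hγ0 hγ1).const_mul C
    simpa using this.neg
  exact le_of_tendsto' htend hbound

end Aux

/-- Suppose `b j = γ` for all `j`, where `γ ∈ [0,1)`. Then every
row sum of `A` equals `1 − γ` (i.e. `A.mulVec 1 = (1−γ)·1`), `1 − γ` is a
complex eigenvalue of `A`, and every complex eigenvalue `μ` of `A` satisfies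
`|μ| ≤ 1 − γ`; hence the spectral radius of `A` equals `1 − γ`. -/
theorem stmt_11 (n : ℕ) (hn : 1 ≤ n)
    (F : Matrix (Fin n) (Fin n) ℝ)
    (hFnonneg : ∀ i j, 0 ≤ F i j)
    (hFrow : ∀ i, ∑ j, F i j = 1)
    (b : Fin n → ℝ) (hb0 : ∀ j, 0 ≤ b j) (hb1 : ∀ j, b j < 1)
    (γ : ℝ) (hγ0 : 0 ≤ γ) (hγ1 : γ < 1) (hbγ : ∀ j, b j = γ)
    (K : Matrix (Fin n) (Fin n) ℝ)
    (hK : ∀ i j, K i j = F i j * b j)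
    (hInv : IsUnit (1 - K))
    (S : Matrix (Fin n) (Fin n) ℝ)
    (hS : S = (1 - K)⁻¹ * F)
    (A R : Matrix (Fin n) (Fin n) ℝ)
    (hA : ∀ i j, A i j = (1 - b i) * S i j * (1 - b j))
    (hR : ∀ i j, R i j = (1 - b i) * S i j * b j) :
    A.mulVec (fun _ => 1) = (fun _ => 1 - γ) ∧
    ((1 - γ : ℝ) : ℂ) ∈ spectrum ℂ (A.map Complex.ofReal) ∧
    (∀ μ : ℂ, μ ∈ spectrum ℂ (A.map Complex.ofReal) → ‖μ‖ ≤ 1 - γ) ∧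
    IsGreatest ((fun z : ℂ => ‖z‖) '' spectrum ℂ (A.map Complex.ofReal)) (1 - γ) := by
  have hγne : (1 - γ) ≠ 0 := by linarith
  have hKnn : ∀ i j, 0 ≤ K i j := fun i j => by
    rw [hK]; exact mul_nonneg (hFnonneg i j) (hb0 j)
  have hKrow : ∀ i, ∑ j, K i j = γ := by
    intro i
    simp only [hK, hbγ]
    rw [← Finset.sum_mul, hFrow i, one_mul]
  have hWnn := aux_inv_nonneg K γ hγ0 hγ1 hKnn hKrow hInv
  have hSnn : ∀ i j, 0 ≤ S i j := by
    intro i j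
    rw [hS, Matrix.mul_apply]
    exact Finset.sum_nonneg fun k _ => mul_nonneg (hWnn i k) (hFnonneg k j)
  have hAnn : ∀ i j, 0 ≤ A i j := by
    intro i j
    rw [hA, hbγ, hbγ]
    have h1 : (0:ℝ) ≤ 1 - γ := by linarith
    exact mul_nonneg (mul_nonneg h1 (hSnn i j)) h1
  -- row sums of S
  have hdet : IsUnit (1 - K).det := (Matrix.isUnit_iff_isUnit_det _).mp hInv
  have hWmul : (1 - K)⁻¹ * (1 - K) = 1 := Matrix.nonsing_inv_mul _ hdet
  have hFone : F.mulVec (fun _ => 1) = (fun _ => 1) := by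
    funext i; simp [Matrix.mulVec, dotProduct, hFrow i]
  have h1K : (1 - K).mulVec (fun _ => (1 - γ)⁻¹) = (fun _ => 1) := by
    funext i
    rw [Matrix.sub_mulVec]
    simp only [Matrix.one_mulVec, Pi.sub_apply, Matrix.mulVec, dotProduct]
    rw [← Finset.sum_mul, hKrow i]
    field_simp
  have hSone : S.mulVec (fun _ => 1) = (fun _ => (1 - γ)⁻¹) := by
    have h1 : S.mulVec (fun _ => 1) = (1 - K)⁻¹.mulVec (fun _ => 1) := by
      rw [hS, ← Matrix.mulVec_mulVec, hFone]
    rw [h1, ← h1K, Matrix.mulVec_mulVec, hWmul, Matrix.one_mulVec]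
  have hSrow : ∀ i, ∑ j, S i j = (1 - γ)⁻¹ := by
    intro i
    have := congrFun hSone i
    simpa [Matrix.mulVec, dotProduct] using this
  have hArow : ∀ i, ∑ j, A i j = 1 - γ := by
    intro i
    simp only [hA, hbγ]
    rw [← Finset.sum_mul]  -- (∑ (1-γ) * S i j) * (1-γ)
    rw [← Finset.mul_sum, hSrow i]
    field_simp
  have hrow : A.mulVec (fun _ => 1) = (fun _ => 1 - γ) := by
    funext i
    simp [Matrix.mulVec, dotProduct, hArow i]
  set M := A.map Complex.ofReal with hM
  have hMrow : ∀ i, ∑ j, M i j = ((1 - γ : ℝ) : ℂ) := by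
    intro i
    simp only [hM, Matrix.map_apply]
    rw [← Complex.ofReal_sum, hArow i]
  have hMabs : ∀ i j, ‖M i j‖ = A i j := by
    intro i j
    simp only [hM, Matrix.map_apply, Complex.norm_real, Real.norm_eq_abs]
    exact abs_of_nonneg (hAnn i j)
  -- spectrum characterization
  have key : ∀ μ : ℂ, μ ∈ spectrum ℂ M ↔ ∃ v : Fin n → ℂ, v ≠ 0 ∧ M.mulVec v = μ • v := by
    intro μ
    rw [spectrum.mem_iff]
    rw [Matrix.isUnit_iff_isUnit_det, isUnit_iff_ne_zero, not_ne_iff]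
    rw [← Matrix.exists_mulVec_eq_zero_iff]
    constructor
    · rintro ⟨v, hv, hv2⟩
      refine ⟨v, hv, ?_⟩
      rw [Algebra.algebraMap_eq_smul_one, Matrix.sub_mulVec, Matrix.smul_mulVec,
        Matrix.one_mulVec, sub_eq_zero] at hv2
      exact hv2.symm
    · rintro ⟨v, hv, hv2⟩
      refine ⟨v, hv, ?_⟩
      rw [Algebra.algebraMap_eq_smul_one, Matrix.sub_mulVec, Matrix.smul_mulVec,
        Matrix.one_mulVec, hv2, sub_self]
  have i0 : Fin n := ⟨0, hn⟩
  have hmem : ((1 - γ : ℝ) : ℂ) ∈ spectrum ℂ M := by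
    rw [key]
    refine ⟨fun _ => 1, ?_, ?_⟩
    · intro h
      have := congrFun h i0
      simp at this
    · funext i
      simp only [Matrix.mulVec, dotProduct, mul_one, Pi.smul_apply, smul_eq_mul]
      rw [hMrow i]
  have hbnd : ∀ μ : ℂ, μ ∈ spectrum ℂ M → ‖μ‖ ≤ 1 - γ := by
    intro μ hμ
    rw [key] at hμ
    obtain ⟨v, hv, hv2⟩ := hμ
    obtain ⟨i, _, hi⟩ := Finset.exists_max_image Finset.univ (fun k => ‖v k‖)
      ⟨i0, Finset.mem_univ i0⟩
    have hvi : 0 < ‖v i‖ := by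
      obtain ⟨j, hj⟩ := Function.ne_iff.mp hv
      have : 0 < ‖v j‖ := by
        simpa [norm_pos_iff] using hj
      exact lt_of_lt_of_le this (hi j (Finset.mem_univ j))
    have hmain : ‖μ‖ * ‖v i‖ ≤ (1 - γ) * ‖v i‖ := by
      have h1 : ‖μ‖ * ‖v i‖ = ‖(M.mulVec v) i‖ := by
        rw [hv2]; simp [norm_mul]
      rw [h1]
      calc ‖(M.mulVec v) i‖
          ≤ ∑ j, ‖M i j * v j‖ := by
            simp only [Matrix.mulVec, dotProduct]
            exact norm_sum_le _ _
        _ ≤ ∑ j, A i j * ‖v i‖ := by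
            refine Finset.sum_le_sum fun j _ => ?_
            rw [norm_mul, hMabs i j]
            exact mul_le_mul_of_nonneg_left (hi j (Finset.mem_univ j)) (hAnn i j)
        _ = (1 - γ) * ‖v i‖ := by rw [← Finset.sum_mul, hArow i]
    exact le_of_mul_le_mul_right hmain hvi
  refine ⟨hrow, hmem, hbnd, ?_⟩
  constructor
  · refine ⟨((1 - γ : ℝ) : ℂ), hmem, ?_⟩
    show ‖((1 - γ : ℝ) : ℂ)‖ = 1 - γ
    rw [Complex.norm_real, Real.norm_eq_abs]
    exact abs_of_nonneg (by linarith)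
  · rintro x ⟨μ, hμ, rfl⟩
    exact hbnd μ hμ
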